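/- In the polynomial ring (ZMod 3)[a₀,…,a₆] (i.e., MvPolynomial (Fin 7) (ZMod 3)), the polynomial A = a₁a₅ − a₂a₄ does not divide the polynomial B = 2a₀a₁a₅a₆ + a₀a₂a₄a₆ + 2a₀a₂a₅² + 2a₀a₄³ + 2a₁²a₄a₆ + 2a₁a₂a₄a₅ + a₁a₃²a₅ + a₁a₃a₄² + 2a₂³a₆ + a₂²a₃a₅ + a₂²a₄² + 2a₂a₃²a₄. -/

import Mathlib

open MvPolynomial

/-- In `(ZMod 3)[a₀,…,a₆]`, the degree-2 invariant `A = a₁a₅ − a₂a₄` does not divide the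
degree-4 invariant `B` of binary sextics. -/
theorem invariant_A_not_dvd_invariant_B :
    ¬ ((X 1 * X 5 - X 2 * X 4 : MvPolynomial (Fin 7) (ZMod 3)) ∣
        (2 * X 0 * X 1 * X 5 * X 6 + X 0 * X 2 * X 4 * X 6 + 2 * X 0 * X 2 * X 5 ^ 2
          + 2 * X 0 * X 4 ^ 3 + 2 * X 1 ^ 2 * X 4 * X 6 + 2 * X 1 * X 2 * X 4 * X 5
          + X 1 * X 3 ^ 2 * X 5 + X 1 * X 3 * X 4 ^ 2 + 2 * X 2 ^ 3 * X 6
          + X 2 ^ 2 * X 3 * X 5 + X 2 ^ 2 * X 4 ^ 2 + 2 * X 2 * X 3 ^ 2 * X 4 :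
          MvPolynomial (Fin 7) (ZMod 3))) := by
  intro h
  have h2 := map_dvd (eval (fun i : Fin 7 => if i = 1 ∨ i = 3 ∨ i = 4 then (1 : ZMod 3) else 0)) h
  simp only [map_add, map_sub, map_mul, map_pow, map_ofNat, eval_X] at h2
  norm_num [Fin.ext_iff] at h2
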